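/- Define Q_n in ℚ[x, y, λ] by Q_0 = 1 and Q_n = (-1)^n C(λ, n) - x * sum_{k=1}^{n} (-1)^k C(y, k) Q_{n-k} for n ≥ 1. Then Q_n = sum_{m=0}^{n} sum_{i=m}^{n} sum_{j=m}^{i} (-1)^{m-i} (m!/n!) [n,i] C(i,j) {j,m} x^m λ^{i-j} y^j. -/

import Mathlib

open Finset

/-- Unsigned Stirling numbers of the first kind. -/
def stirling1 : ℕ → ℕ → ℕ
  | 0, 0 => 1
  | 0, _ + 1 => 0
  | _ + 1, 0 => 0
  | n + 1, k + 1 => n * stirling1 n (k + 1) + stirling1 n k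

/-- Stirling numbers of the second kind. -/
def stirling2 : ℕ → ℕ → ℕ
  | 0, 0 => 1
  | 0, _ + 1 => 0
  | _ + 1, 0 => 0
  | n + 1, k + 1 => (k + 1) * stirling2 n (k + 1) + stirling2 n k

/-- Generalized binomial coefficient `C(x, r) = x(x-1)⋯(x-r+1)/r!` in a ℚ-algebra. -/
noncomputable def gchoose {R : Type*} [CommRing R] [Algebra ℚ R] (x : R) (r : ℕ) : R :=
  algebraMap ℚ R ((r.factorial : ℚ)⁻¹) * ∏ i ∈ Finset.range r, (x - i)

set_option linter.unusedSectionVars false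
set_option linter.unusedVariables false
set_option maxHeartbeats 1000000

lemma stirling1_eq_zero' : ∀ n i, n < i → stirling1 n i = 0 := by
  intro n
  induction n with
  | zero => intro i hi; match i, hi with | i+1, _ => rfl
  | succ n ih =>
    intro i hi
    match i, hi with
    | i+1, hi =>
      show n * stirling1 n (i+1) + stirling1 n i = 0
      rw [ih (i+1) (by omega), ih i (by omega)]
      simp

lemma stirling2_eq_zero' : ∀ j m, j < m → stirling2 j m = 0 := by
  intro j
  induction j with
  | zero => intro m hm; match m, hm with | m+1, _ => rfl
  | succ j ih =>
    intro m hm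
    match m, hm with
    | m+1, hm =>
      show (m+1) * stirling2 j (m+1) + stirling2 j m = 0
      rw [ih (m+1) (by omega), ih m (by omega)]
      simp

lemma stirling1_zero_right : ∀ n, stirling1 (n+1) 0 = 0 := fun n => rfl

lemma stirling1_eq_zero : ∀ n i, n < i → stirling1 n i = 0 := by
  intro n
  induction n with
  | zero => intro i hi; match i, hi with | i+1, _ => rfl
  | succ n ih =>
    intro i hi
    match i, hi with
    | i+1, hi =>
      show n * stirling1 n (i+1) + stirling1 n i = 0
      rw [ih (i+1) (by omega), ih i (by omega)]
      simp

lemma stirling2_eq_zero : ∀ j m, j < m → stirling2 j m = 0 := by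
  intro j
  induction j with
  | zero => intro m hm; match m, hm with | m+1, _ => rfl
  | succ j ih =>
    intro m hm
    match m, hm with
    | m+1, hm =>
      show (m+1) * stirling2 j (m+1) + stirling2 j m = 0
      rw [ih (m+1) (by omega), ih m (by omega)]
      simp

lemma stirling2_zero_left : ∀ m, stirling2 0 m = if m = 0 then 1 else 0 := by
  intro m; match m with
  | 0 => rfl
  | m+1 => rfl


lemma stirling2_sum : ∀ (j m : ℕ),
    ∑ r ∈ range (m+1), (-1:ℚ)^r * (m.choose r : ℚ) * (r:ℚ)^j
      = (-1:ℚ)^m * (m.factorial : ℚ) * (stirling2 j m : ℚ) := by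
  intro j
  induction j with
  | zero =>
    intro m
    have hZ : ∑ r ∈ range (m+1), (-1:ℚ)^r * (m.choose r : ℚ) * (r:ℚ)^0
        = ∑ r ∈ range (m+1), (-1:ℚ)^r * (m.choose r : ℚ) := by
      refine sum_congr rfl fun r _ => by ring
    have hI : ∑ r ∈ range (m+1), (-1:ℚ)^r * (m.choose r : ℚ)
        = ((if m = 0 then 1 else 0 : ℤ) : ℚ) := by
      rw [← Int.alternating_sum_range_choose (n := m)]
      push_cast
      rfl
    rw [hZ, hI]
    match m with
    | 0 => norm_num [stirling2]
    | m+1 => simp [stirling2, show stirling2 0 (m+1) = 0 from rfl]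
  | succ j ih =>
    intro m
    match m with
    | 0 =>
      simp [show stirling2 (j+1) 0 = 0 from rfl]
    | m'+1 =>
      -- notation
      set m := m' + 1 with hm
      -- LHS = -(m) * T
      have hsplit : ∑ r ∈ range (m+1), (-1:ℚ)^r * (m.choose r : ℚ) * (r:ℚ)^(j+1)
          = ∑ s ∈ range (m'+1), (-1:ℚ)^(s+1) * (m.choose (s+1) : ℚ) * ((s:ℚ)+1)^(j+1) := by
        rw [Finset.sum_range_succ' (fun r => (-1:ℚ)^r * (m.choose r : ℚ) * (r:ℚ)^(j+1)) m]
        push_cast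
        norm_num
        rfl
      have hterm : ∀ s ∈ range (m'+1),
          (-1:ℚ)^(s+1) * (m.choose (s+1) : ℚ) * ((s:ℚ)+1)^(j+1)
          = -(m:ℚ) * ((-1:ℚ)^s * (m'.choose s : ℚ) * ((s:ℚ)+1)^j) := by
        intro s _
        have hnat : (m' + 1) * m'.choose s = (m'+1).choose (s+1) * (s+1) :=
          Nat.add_one_mul_choose_eq m' s
        have hq : (m.choose (s+1) : ℚ) * ((s:ℚ)+1) = (m:ℚ) * (m'.choose s : ℚ) := by
          rw [hm]
          have := congrArg (fun t : ℕ => (t : ℚ)) hnat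
          push_cast at this ⊢
          linarith [this]
        have : ((s:ℚ)+1)^(j+1) = ((s:ℚ)+1) * ((s:ℚ)+1)^j := by ring
        rw [this]
        calc (-1:ℚ)^(s+1) * (m.choose (s+1) : ℚ) * (((s:ℚ)+1) * ((s:ℚ)+1)^j)
            = (-1:ℚ)^(s+1) * ((m.choose (s+1) : ℚ) * ((s:ℚ)+1)) * ((s:ℚ)+1)^j := by ring
          _ = (-1:ℚ)^(s+1) * ((m:ℚ) * (m'.choose s : ℚ)) * ((s:ℚ)+1)^j := by rw [hq]
          _ = -(m:ℚ) * ((-1:ℚ)^s * (m'.choose s : ℚ) * ((s:ℚ)+1)^j) := by ring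
      rw [hsplit, sum_congr rfl hterm, ← mul_sum]
      -- claim : T = S(j, m') - S(j, m)
      have hU : ∑ s ∈ range (m'+1), (-1:ℚ)^(s+1) * (m'.choose (s+1) : ℚ) * ((s:ℚ)+1)^j
          = (∑ r ∈ range (m'+1), (-1:ℚ)^r * (m'.choose r : ℚ) * (r:ℚ)^j) - (0:ℚ)^j := by
        rw [Finset.sum_range_succ (fun s => (-1:ℚ)^(s+1) * (m'.choose (s+1) : ℚ) * ((s:ℚ)+1)^j) m',
          Nat.choose_succ_self]
        rw [Finset.sum_range_succ' (fun r => (-1:ℚ)^r * (m'.choose r : ℚ) * (r:ℚ)^j) m']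
        push_cast
        simp [Nat.choose_zero_right]
      have hclaim : ∑ s ∈ range (m'+1), (-1:ℚ)^s * (m'.choose s : ℚ) * ((s:ℚ)+1)^j
          = (∑ r ∈ range (m'+1), (-1:ℚ)^r * (m'.choose r : ℚ) * (r:ℚ)^j)
            - (∑ r ∈ range (m+1), (-1:ℚ)^r * (m.choose r : ℚ) * (r:ℚ)^j) := by
        have hS : ∑ r ∈ range (m+1), (-1:ℚ)^r * (m.choose r : ℚ) * (r:ℚ)^j
            = (∑ s ∈ range (m'+1), (-1:ℚ)^(s+1) * ((m'.choose s : ℚ) + (m'.choose (s+1) : ℚ)) * ((s:ℚ)+1)^j)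
              + (0:ℚ)^j := by
          rw [Finset.sum_range_succ' (fun r => (-1:ℚ)^r * (m.choose r : ℚ) * (r:ℚ)^j) m]
          have : ∀ s ∈ range (m'+1),
              (-1:ℚ)^(s+1) * (m.choose (s+1) : ℚ) * (((s+1:ℕ)):ℚ)^j
              = (-1:ℚ)^(s+1) * ((m'.choose s : ℚ) + (m'.choose (s+1) : ℚ)) * ((s:ℚ)+1)^j := by
            intro s _
            rw [hm, Nat.choose_succ_succ]
            push_cast
            ring
          rw [sum_congr rfl this]
          norm_num
        have hsplit2 : ∑ s ∈ range (m'+1), (-1:ℚ)^(s+1) * ((m'.choose s : ℚ) + (m'.choose (s+1) : ℚ)) * ((s:ℚ)+1)^j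
            = -(∑ s ∈ range (m'+1), (-1:ℚ)^s * (m'.choose s : ℚ) * ((s:ℚ)+1)^j)
              + (∑ s ∈ range (m'+1), (-1:ℚ)^(s+1) * (m'.choose (s+1) : ℚ) * ((s:ℚ)+1)^j) := by
          rw [← sum_neg_distrib, ← sum_add_distrib]
          refine sum_congr rfl fun s _ => by ring
        rw [hsplit2, hU] at hS
        linarith [hS]
      rw [hclaim, ih m', ih m]
      have h2 : (stirling2 (j+1) m : ℚ) = (m:ℚ) * (stirling2 j m : ℚ) + (stirling2 j m' : ℚ) := by
        rw [hm]
        show ((( m' + 1) * stirling2 j (m'+1) + stirling2 j m' : ℕ) : ℚ) = _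
        push_cast
        ring
      rw [h2, hm]
      have hfac : ((m'+1).factorial : ℚ) = (m'+1 : ℚ) * (m'.factorial : ℚ) := by
        rw [Nat.factorial_succ]; push_cast; ring
      rw [hfac]
      push_cast
      ring


section Helpers
variable {R : Type*} [CommRing R] [Algebra ℚ R]

/-- rising factorial divided by n! -/
noncomputable def grise (z : R) (n : ℕ) : R :=
  algebraMap ℚ R ((n.factorial : ℚ)⁻¹) * ∏ i ∈ Finset.range n, (z + i)

lemma grise_zero (z : R) : grise z 0 = 1 := by simp [grise]

lemma neg_pow_gchoose (z : R) (n : ℕ) : (-1 : R) ^ n * gchoose z n = grise (-z) n := by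
  rw [gchoose, grise, mul_comm ((-1:R)^n), mul_assoc]
  congr 1
  have : ∀ i ∈ range n, (-z + (i:R)) = (-1) * (z - i) := by intro i _; ring
  rw [prod_congr rfl this, prod_mul_distrib, prod_const, card_range, mul_comm]

lemma rf_add (a b : R) (n : ℕ) :
    ∏ i ∈ range n, (a + b + i) =
      ∑ k ∈ range (n + 1), (n.choose k : R) *
        ((∏ i ∈ range k, (a + i)) * ∏ i ∈ range (n - k), (b + i)) := by
  induction n with
  | zero => simp
  | succ n ih =>
    rw [prod_range_succ, ih, sum_mul]
    have key : ∀ k ∈ range (n + 1),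
        (n.choose k : R) * ((∏ i ∈ range k, (a + i)) * ∏ i ∈ range (n - k), (b + i)) * (a + b + n)
        = (n.choose k : R) * ((∏ i ∈ range (k+1), (a + i)) * ∏ i ∈ range (n - k), (b + i))
          + (n.choose k : R) * ((∏ i ∈ range k, (a + i)) * ∏ i ∈ range (n + 1 - k), (b + i)) := by
      intro k hk
      rw [mem_range] at hk
      have hk' : k ≤ n := Nat.lt_succ_iff.mp hk
      have h1 : (a + b + n : R) = (a + k) + (b + (n - k : ℕ)) := by
        rw [Nat.cast_sub hk']; ring
      have h2 : n + 1 - k = (n - k) + 1 := by omega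
      rw [h1, mul_add, prod_range_succ, h2, prod_range_succ]
      ring
    rw [sum_congr rfl key, sum_add_distrib]
    set f1 : ℕ → R := fun j => (n.choose j : R) *
      ((∏ i ∈ range (j+1), (a + i)) * ∏ i ∈ range (n-j), (b + i)) with hf1
    set f2 : ℕ → R := fun j => (n.choose (j+1) : R) *
      ((∏ i ∈ range (j+1), (a + i)) * ∏ i ∈ range (n-j), (b + i)) with hf2
    have hT : ∑ k ∈ range (n + 1 + 1), ((n+1).choose k : R) *
          ((∏ i ∈ range k, (a + i)) * ∏ i ∈ range (n + 1 - k), (b + i))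
        = (∑ j ∈ range (n+1), (f1 j + f2 j)) +
          (∏ i ∈ range 0, (a + i)) * ∏ i ∈ range (n+1), (b + i) := by
      rw [Finset.sum_range_succ' (fun k => ((n+1).choose k : R) *
        ((∏ i ∈ range k, (a + i)) * ∏ i ∈ range (n + 1 - k), (b + i))) (n+1)]
      congr 1
      · refine sum_congr rfl fun j hj => ?_
        have h3 : n + 1 - (j + 1) = n - j := by omega
        rw [h3, Nat.choose_succ_succ, hf1, hf2]
        push_cast
        ring
      · simp
    have hS : ∑ k ∈ range (n + 1), (n.choose k : R) *
          ((∏ i ∈ range k, (a + i)) * ∏ i ∈ range (n + 1 - k), (b + i))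
        = (∑ j ∈ range (n+1), f2 j) +
          (∏ i ∈ range 0, (a + i)) * ∏ i ∈ range (n+1), (b + i) := by
      rw [Finset.sum_range_succ' (fun k => (n.choose k : R) *
        ((∏ i ∈ range k, (a + i)) * ∏ i ∈ range (n + 1 - k), (b + i))) n]
      rw [Finset.sum_range_succ (fun j => f2 j) n]
      have hz : f2 n = 0 := by
        rw [hf2]; simp [Nat.choose_succ_self]
      rw [hz, add_zero]
      congr 1
      · refine sum_congr rfl fun j hj => ?_
        have h3 : n + 1 - (j + 1) = n - j := by omega
        rw [h3, hf2]
      · simp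
    rw [hS, hT, sum_add_distrib]
    ring

lemma grise_add (a b : R) (n : ℕ) :
    grise (a + b) n = ∑ k ∈ range (n + 1), grise a k * grise b (n - k) := by
  unfold grise
  rw [rf_add, mul_sum]
  refine sum_congr rfl fun k hk => ?_
  rw [mem_range] at hk
  have hk' : k ≤ n := Nat.lt_succ_iff.mp hk
  have : ((n.choose k : ℕ) : R) = algebraMap ℚ R (n.choose k : ℚ) := by
    simp
  rw [this]
  rw [show ∀ (u : ℚ) (p q : R), algebraMap ℚ R u * (algebraMap ℚ R (n.choose k : ℚ) * (p * q))
      = algebraMap ℚ R ((n.choose k : ℚ) * u) * (p * q) from by intros; rw [map_mul]; ring]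
  have hfac : ((n.choose k : ℚ)) * (n.factorial : ℚ)⁻¹
      = (k.factorial : ℚ)⁻¹ * ((n-k).factorial : ℚ)⁻¹ := by
    rw [Nat.cast_choose ℚ hk']
    have h1 : (n.factorial : ℚ) ≠ 0 := by positivity
    have h2 : (k.factorial : ℚ) ≠ 0 := by positivity
    have h3 : (((n-k).factorial : ℕ) : ℚ) ≠ 0 := by positivity
    field_simp
  rw [hfac, map_mul]
  ring

lemma rf_stirling (w : R) : ∀ n : ℕ,
    ∏ i ∈ range n, (w + i) = ∑ i ∈ range (n+1), (stirling1 n i : R) * w ^ i := by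
  intro n
  induction n with
  | zero => simp [stirling1]
  | succ n ih =>
    rw [prod_range_succ, ih, mul_add]
    have hT : ∑ i ∈ range (n+1+1), (stirling1 (n+1) i : R) * w ^ i
        = (n : R) * (∑ j ∈ range (n+1), (stirling1 n (j+1) : R) * w ^ (j+1))
          + ∑ j ∈ range (n+1), (stirling1 n j : R) * w ^ (j+1) := by
      rw [Finset.sum_range_succ' (fun i => (stirling1 (n+1) i : R) * w ^ i) (n+1)]
      have h0 : (stirling1 (n+1) 0 : R) * w ^ 0 = 0 := by
        rw [stirling1_zero_right]; simp
      rw [h0, add_zero, mul_sum, ← sum_add_distrib]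
      refine sum_congr rfl fun j _ => ?_
      show ((n * stirling1 n (j+1) + stirling1 n j : ℕ) : R) * w ^ (j+1) = _
      push_cast
      ring
    rw [hT]
    have hshift : ∑ j ∈ range (n+1), (stirling1 n (j+1) : R) * w ^ (j+1)
        = (∑ i ∈ range (n+1), (stirling1 n i : R) * w ^ i) - (stirling1 n 0 : R) := by
      have := Finset.sum_range_succ' (fun i => (stirling1 n i : R) * w ^ i) n
      rw [Finset.sum_range_succ (fun j => (stirling1 n (j+1) : R) * w ^ (j+1)) n,
        stirling1_eq_zero n (n+1) (by omega)]
      rw [this]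
      push_cast
      ring
    rw [hshift]
    have hn0 : (n : R) * (stirling1 n 0 : R) = 0 := by
      match n with
      | 0 => simp
      | n+1 => rw [stirling1_zero_right]; simp
    have hw : (∑ i ∈ range (n+1), (stirling1 n i : R) * w ^ i) * w
        = ∑ j ∈ range (n+1), (stirling1 n j : R) * w ^ (j+1) := by
      rw [sum_mul]; exact sum_congr rfl fun i _ => by ring
    rw [hw]
    rw [mul_sub]
    rw [hn0]
    ring


noncomputable def Agen (l y : R) (n m : ℕ) : R :=
  ∑ r ∈ range (m+1), (-1:R)^r * (m.choose r : R) * grise (-l - (r:R) * y) n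

lemma Agen_eq (l y : R) (n m : ℕ) :
    Agen l y n m = ∑ i ∈ Icc m n, ∑ j ∈ Icc m i,
      (-1:R)^(i-m) * algebraMap ℚ R ((m.factorial : ℚ) / (n.factorial : ℚ)) *
        (stirling1 n i : R) * (i.choose j : R) * (stirling2 j m : R) * l^(i-j) * y^j := by
  have h1 : ∀ r : ℕ, grise (-l - (r:R)*y) n
      = ∑ i ∈ range (n+1), algebraMap ℚ R ((n.factorial:ℚ)⁻¹) * (stirling1 n i : R) *
          (-l - (r:R)*y)^i := by
    intro r
    rw [grise, rf_stirling, mul_sum]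
    exact sum_congr rfl fun i _ => by ring
  have h2 : ∀ (r i : ℕ), (-l - (r:R)*y)^i
      = ∑ j ∈ range (i+1), (-1:R)^i * (i.choose j : R) * (r:R)^j * l^(i-j) * y^j := by
    intro r i
    have hrw : (-l - (r:R)*y) = (-((r:R)*y)) + (-l) := by ring
    rw [hrw, add_pow]
    refine sum_congr rfl fun j hj => ?_
    rw [mem_range] at hj
    have e1 : (-((r:R)*y))^j = (-1:R)^j * ((r:R)^j * y^j) := by
      rw [neg_pow, mul_pow]
    have e2 : (-l)^(i-j) = (-1:R)^(i-j) * l^(i-j) := by rw [neg_pow]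
    rw [e1, e2]
    have e4 : (-1:R)^(i-j) * (-1:R)^j = (-1:R)^i := by
      rw [← pow_add, Nat.sub_add_cancel (by omega : j ≤ i)]
    rw [← e4]
    ring
  -- triple sum form
  have hL : Agen l y n m = ∑ i ∈ range (n+1), ∑ j ∈ range (i+1),
      (algebraMap ℚ R ((n.factorial:ℚ)⁻¹) * (stirling1 n i : R) *
        ((-1:R)^i * (i.choose j : R) * l^(i-j) * y^j)) *
      (∑ r ∈ range (m+1), (-1:R)^r * (m.choose r : R) * (r:R)^j) := by
    unfold Agen
    have step1 : ∀ r ∈ range (m+1),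
        (-1:R)^r * (m.choose r : R) * grise (-l - (r:R)*y) n
        = ∑ i ∈ range (n+1), ∑ j ∈ range (i+1),
            ((-1:R)^r * (m.choose r : R) * (r:R)^j) *
            (algebraMap ℚ R ((n.factorial:ℚ)⁻¹) * (stirling1 n i : R) *
              ((-1:R)^i * (i.choose j : R) * l^(i-j) * y^j)) := by
      intro r _
      rw [h1, mul_sum]
      refine sum_congr rfl fun i _ => ?_
      rw [h2, mul_sum, mul_sum]
      refine sum_congr rfl fun j _ => ?_
      ring
    rw [sum_congr rfl step1]
    rw [Finset.sum_comm]
    refine sum_congr rfl fun i _ => ?_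
    rw [Finset.sum_comm]
    refine sum_congr rfl fun j _ => ?_
    rw [mul_sum]
    refine sum_congr rfl fun r _ => by ring
  -- evaluate the inner r-sum
  have h4 : ∀ j : ℕ, (∑ r ∈ range (m+1), (-1:R)^r * (m.choose r : R) * (r:R)^j)
      = algebraMap ℚ R ((-1:ℚ)^m * (m.factorial : ℚ) * (stirling2 j m : ℚ)) := by
    intro j
    rw [← stirling2_sum j m, map_sum]
    refine sum_congr rfl fun r _ => ?_
    rw [map_mul, map_mul, map_pow, map_pow, map_neg, map_one]
    congr 1
    · congr 1
      · simp
    · simp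
  have hE : Agen l y n m = ∑ i ∈ range (n+1), ∑ j ∈ range (i+1),
      (-1:R)^i * algebraMap ℚ R ((-1:ℚ)^m * (m.factorial : ℚ) / (n.factorial : ℚ)) *
        (stirling1 n i : R) * (i.choose j : R) * (stirling2 j m : R) * l^(i-j) * y^j := by
    rw [hL]
    refine sum_congr rfl fun i _ => sum_congr rfl fun j _ => ?_
    rw [h4]
    have : algebraMap ℚ R ((-1:ℚ)^m * (m.factorial : ℚ) * (stirling2 j m : ℚ))
        = algebraMap ℚ R ((-1:ℚ)^m * (m.factorial : ℚ)) * (stirling2 j m : R) := by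
      rw [map_mul]; simp
    rw [this]
    have : algebraMap ℚ R ((-1:ℚ)^m * (m.factorial : ℚ) / (n.factorial : ℚ))
        = algebraMap ℚ R ((n.factorial:ℚ)⁻¹) * algebraMap ℚ R ((-1:ℚ)^m * (m.factorial : ℚ)) := by
      rw [← map_mul]; congr 1; field_simp
    rw [this]
    ring
  rw [hE]
  -- restrict ranges
  have hInner : ∀ i ∈ range (n+1),
      (∑ j ∈ range (i+1),
        (-1:R)^i * algebraMap ℚ R ((-1:ℚ)^m * (m.factorial : ℚ) / (n.factorial : ℚ)) *
          (stirling1 n i : R) * (i.choose j : R) * (stirling2 j m : R) * l^(i-j) * y^j)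
      = ∑ j ∈ Icc m i,
        (-1:R)^i * algebraMap ℚ R ((-1:ℚ)^m * (m.factorial : ℚ) / (n.factorial : ℚ)) *
          (stirling1 n i : R) * (i.choose j : R) * (stirling2 j m : R) * l^(i-j) * y^j := by
    intro i _
    refine (sum_subset ?_ ?_).symm
    · intro j hj; rw [mem_Icc] at hj; rw [mem_range]; omega
    · intro j hj hj'
      rw [mem_range] at hj
      rw [mem_Icc] at hj'
      have : j < m := by omega
      rw [stirling2_eq_zero' j m this]
      simp
  rw [sum_congr rfl hInner]
  have hOuter : (∑ i ∈ range (n+1), ∑ j ∈ Icc m i,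
        (-1:R)^i * algebraMap ℚ R ((-1:ℚ)^m * (m.factorial : ℚ) / (n.factorial : ℚ)) *
          (stirling1 n i : R) * (i.choose j : R) * (stirling2 j m : R) * l^(i-j) * y^j)
      = ∑ i ∈ Icc m n, ∑ j ∈ Icc m i,
        (-1:R)^i * algebraMap ℚ R ((-1:ℚ)^m * (m.factorial : ℚ) / (n.factorial : ℚ)) *
          (stirling1 n i : R) * (i.choose j : R) * (stirling2 j m : R) * l^(i-j) * y^j := by
    refine (sum_subset ?_ ?_).symm
    · intro i hi; rw [mem_Icc] at hi; rw [mem_range]; omega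
    · intro i hi hi'
      rw [mem_range] at hi
      rw [mem_Icc] at hi'
      have : i < m := by omega
      have : Icc m i = ∅ := by rw [Finset.Icc_eq_empty]; omega
      rw [this, sum_empty]
  rw [hOuter]
  refine sum_congr rfl fun i hi => sum_congr rfl fun j hj => ?_
  rw [mem_Icc] at hi hj
  -- sign juggling: (-1)^i * algebraMap ((-1)^m * c) = (-1)^(i-m) * algebraMap c
  have hsgn : (-1:R)^i * algebraMap ℚ R ((-1:ℚ)^m * (m.factorial : ℚ) / (n.factorial : ℚ))
      = (-1:R)^(i-m) * algebraMap ℚ R ((m.factorial : ℚ) / (n.factorial : ℚ)) := by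
    have e1 : ((-1:ℚ)^m * (m.factorial : ℚ) / (n.factorial : ℚ))
        = (-1:ℚ)^m * ((m.factorial : ℚ) / (n.factorial : ℚ)) := by ring
    rw [e1, map_mul, map_pow, map_neg, map_one]
    have e2 : (-1:R)^i * (-1:R)^m = (-1:R)^(i-m) * ((-1:R)^m * (-1:R)^m) := by
      rw [← pow_add, ← pow_add, ← pow_add]
      congr 1
      omega
    have e3 : (-1:R)^m * (-1:R)^m = 1 := by
      rw [← pow_add, ← two_mul, pow_mul]
      norm_num
    rw [← mul_assoc, e2, mul_assoc ((-1:R)^(i-m)), e3, one_mul]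
  rw [← hsgn]

lemma Agen_eq_zero (l y : R) {n m : ℕ} (h : n < m) : Agen l y n m = 0 := by
  rw [Agen_eq]
  have : Icc m n = ∅ := by rw [Finset.Icc_eq_empty]; omega
  rw [this, sum_empty]


lemma Agen_succ (l y : R) (n m : ℕ) :
    Agen l y n (m+1) = Agen l y n m - ∑ k ∈ range (n+1), grise (-y) k * Agen l y (n-k) m := by
  have hswap : ∑ k ∈ range (n+1), grise (-y) k * Agen l y (n-k) m
      = ∑ r ∈ range (m+1), (-1:R)^r * (m.choose r : R) * grise (-l - ((r+1:ℕ):R) * y) n := by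
    unfold Agen
    have step : ∀ k ∈ range (n+1),
        grise (-y) k * ∑ r ∈ range (m+1), (-1:R)^r * (m.choose r : R) * grise (-l - (r:R)*y) (n-k)
        = ∑ r ∈ range (m+1), (-1:R)^r * (m.choose r : R) *
            (grise (-y) k * grise (-l - (r:R)*y) (n-k)) := by
      intro k _
      rw [mul_sum]
      exact sum_congr rfl fun r _ => by ring
    rw [sum_congr rfl step, Finset.sum_comm]
    refine sum_congr rfl fun r _ => ?_
    rw [← mul_sum, ← grise_add]
    have harg : (-y) + (-l - (r:R)*y) = -l - ((r+1:ℕ):R)*y := by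
      push_cast
      ring
    rw [harg]
  rw [hswap]
  unfold Agen
  have key : ∑ s ∈ range (m+1), (-1:R)^s * (m.choose (s+1) : R) * grise (-l - ((s+1:ℕ):R) * y) n
      = grise (-l - ((0:ℕ):R) * y) n
        - ∑ r ∈ range (m+1), (-1:R)^r * (m.choose r : R) * grise (-l - (r:R) * y) n := by
    rw [Finset.sum_range_succ'
      (fun r => (-1:R)^r * (m.choose r : R) * grise (-l - (r:R) * y) n) m]
    rw [Finset.sum_range_succ
      (fun s => (-1:R)^s * (m.choose (s+1) : R) * grise (-l - ((s+1:ℕ):R) * y) n) m]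
    rw [Nat.choose_succ_self]
    have e : ∀ s ∈ range m,
        (-1:R)^(s+1) * (m.choose (s+1) : R) * grise (-l - ((s+1:ℕ):R) * y) n
        = -((-1:R)^s * (m.choose (s+1) : R) * grise (-l - ((s+1:ℕ):R) * y) n) := by
      intro s _; ring
    rw [sum_congr rfl e, sum_neg_distrib]
    push_cast [Nat.choose_zero_right]
    ring
  rw [Finset.sum_range_succ'
    (fun r => (-1:R)^r * (((m+1).choose r : ℕ) : R) * grise (-l - (r:R) * y) n) (m+1)]
  have pascal : ∀ s ∈ range (m+1),
      (-1:R)^(s+1) * (((m+1).choose (s+1) : ℕ) : R) * grise (-l - ((s+1:ℕ):R) * y) n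
      = -((-1:R)^s * (m.choose s : R) * grise (-l - ((s+1:ℕ):R) * y) n)
        - (-1:R)^s * (m.choose (s+1) : R) * grise (-l - ((s+1:ℕ):R) * y) n := by
    intro s _
    rw [Nat.choose_succ_succ]
    push_cast
    ring
  rw [sum_congr rfl pascal, sum_sub_distrib, sum_neg_distrib, key]
  simp only [Nat.choose_zero_right, Nat.cast_one, pow_zero, one_mul, Nat.cast_zero]
  ring

lemma Agen_rec (l y : R) (n m : ℕ) :
    Agen l y n (m+1) = - ∑ k ∈ Icc 1 n, grise (-y) k * Agen l y (n-k) m := by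
  have h := Agen_succ l y n m
  rw [Finset.sum_range_succ' (fun k => grise (-y) k * Agen l y (n-k) m) n] at h
  have h0 : grise (-y) 0 * Agen l y (n-0) m = Agen l y n m := by
    rw [grise_zero]; simp
  rw [h0] at h
  have hIcc : ∑ k ∈ Icc 1 n, grise (-y) k * Agen l y (n-k) m
      = ∑ k ∈ range n, grise (-y) (k+1) * Agen l y (n-(k+1)) m := by
    rw [← Finset.Ico_add_one_right_eq_Icc, Finset.sum_Ico_eq_sum_range]
    exact sum_congr (by norm_num) fun k _ => by rw [add_comm 1 k]
  rw [hIcc, h]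
  ring

end Helpers

open MvPolynomial in
theorem stmt10 (Q : ℕ → MvPolynomial (Fin 3) ℚ)
    (x y l : MvPolynomial (Fin 3) ℚ) (hx : x = X 0) (hy : y = X 1) (hl : l = X 2)
    (hQ0 : Q 0 = 1)
    (hQ : ∀ n : ℕ, 1 ≤ n →
      Q n = (-1) ^ n * gchoose l n -
        x * ∑ k ∈ Finset.Icc 1 n, (-1) ^ k * gchoose y k * Q (n - k)) :
    ∀ n : ℕ, Q n = ∑ m ∈ Finset.range (n + 1), ∑ i ∈ Finset.Icc m n, ∑ j ∈ Finset.Icc m i,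
      (-1) ^ (i - m) * (algebraMap ℚ (MvPolynomial (Fin 3) ℚ)
          ((m.factorial : ℚ) / n.factorial)) *
        stirling1 n i * i.choose j * stirling2 j m * x ^ m * l ^ (i - j) * y ^ j := by
  have hRHS : ∀ n : ℕ,
      (∑ m ∈ Finset.range (n + 1), ∑ i ∈ Finset.Icc m n, ∑ j ∈ Finset.Icc m i,
        (-1) ^ (i - m) * (algebraMap ℚ (MvPolynomial (Fin 3) ℚ) ((m.factorial : ℚ) / n.factorial)) *
          stirling1 n i * i.choose j * stirling2 j m * x ^ m * l ^ (i - j) * y ^ j)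
      = ∑ m ∈ range (n+1), x^m * Agen l y n m := by
    intro n
    refine sum_congr rfl fun m _ => ?_
    rw [Agen_eq, mul_sum]
    refine sum_congr rfl fun i _ => ?_
    rw [mul_sum]
    refine sum_congr rfl fun j _ => by ring
  intro n
  induction n using Nat.strong_induction_on with
  | _ n IH =>
  rcases Nat.eq_zero_or_pos n with hn | hn
  · subst hn
    rw [hQ0, hRHS 0]
    rw [show range 1 = {0} from rfl, sum_singleton]
    unfold Agen
    rw [show range 1 = {0} from rfl, sum_singleton]
    norm_num [grise]
  · rw [hQ n hn, hRHS n]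
    have hQk : ∀ k ∈ Icc 1 n, (-1 : MvPolynomial (Fin 3) ℚ)^k * gchoose y k * Q (n-k)
        = grise (-y) k * ∑ m ∈ range n, x^m * Agen l y (n-k) m := by
      intro k hk
      rw [mem_Icc] at hk
      rw [IH (n-k) (by omega), hRHS (n-k), neg_pow_gchoose]
      congr 1
      refine sum_subset ?_ ?_
      · intro m hm; rw [mem_range] at hm ⊢; omega
      · intro m hm hm'
        rw [mem_range] at hm hm'
        rw [Agen_eq_zero l y (by omega : n - k < m)]
        ring
    rw [sum_congr rfl hQk]
    have hswap : ∑ k ∈ Icc 1 n, grise (-y) k * ∑ m ∈ range n, x^m * Agen l y (n-k) m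
        = ∑ m ∈ range n, x^m * ∑ k ∈ Icc 1 n, grise (-y) k * Agen l y (n-k) m := by
      have e1 : ∀ k ∈ Icc 1 n, grise (-y) k * ∑ m ∈ range n, x^m * Agen l y (n-k) m
          = ∑ m ∈ range n, x^m * (grise (-y) k * Agen l y (n-k) m) := by
        intro k _
        rw [mul_sum]
        exact sum_congr rfl fun m _ => by ring
      rw [sum_congr rfl e1, Finset.sum_comm]
      exact sum_congr rfl fun m _ => by rw [mul_sum]
    rw [hswap]
    have hrec : ∀ m ∈ range n, x^m * ∑ k ∈ Icc 1 n, grise (-y) k * Agen l y (n-k) m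
        = -(x^m * Agen l y n (m+1)) := by
      intro m _
      rw [show ∑ k ∈ Icc 1 n, grise (-y) k * Agen l y (n-k) m = -(Agen l y n (m+1)) from by
        rw [Agen_rec l y n m]; ring]
      ring
    rw [sum_congr rfl hrec]
    have hlhs : (-1 : MvPolynomial (Fin 3) ℚ)^n * gchoose l n = Agen l y n 0 := by
      rw [neg_pow_gchoose]
      unfold Agen
      rw [show range 1 = {0} from rfl, sum_singleton]
      norm_num
    rw [hlhs]
    rw [Finset.sum_range_succ' (fun m => x^m * Agen l y n m) n]
    rw [mul_sum]
    have e2 : ∀ i ∈ range n, x * -(x^i * Agen l y n (i+1)) = -(x^(i+1) * Agen l y n (i+1)) := by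
      intro i _; ring
    rw [sum_congr rfl e2, sum_neg_distrib]
    ring
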